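/- A predicate P(t) holds for all t in the closed interval [0, T], where T > 0, if and only if: (1) P(0) holds; (2) for all τ ∈ (0, T], if P(τ') holds for all τ' ∈ [0, τ), then P(τ) holds; and (3) for all τ ∈ [0, T), if P(τ') holds for all τ' ∈ [0, τ], then there exists ε > 0 such that P(τ'') holds for all τ'' ∈ (τ, τ + ε). -/
import Mathlib


theorem continuity_induction (P : ℝ → Prop) (T : ℝ) (hT : 0 < T) :
    (∀ t ∈ Set.Icc (0:ℝ) T, P t) ↔
      (P 0 ∧
        (∀ τ ∈ Set.Ioc (0:ℝ) T, (∀ τ' ∈ Set.Ico (0:ℝ) τ, P τ') → P τ) ∧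
        (∀ τ ∈ Set.Ico (0:ℝ) T, (∀ τ' ∈ Set.Icc (0:ℝ) τ, P τ') →
          ∃ ε > (0:ℝ), ∀ τ'' ∈ Set.Ioo τ (τ + ε), P τ'')) := by
  constructor
  · intro h
    refine ⟨h 0 ⟨le_refl 0, hT.le⟩, fun τ hτ _ => h τ ⟨hτ.1.le, hτ.2⟩, fun τ hτ _ => ?_⟩
    exact ⟨T - τ, by linarith [hτ.2], fun τ'' h'' => h τ'' ⟨by linarith [hτ.1, h''.1], by linarith [h''.2]⟩⟩
  · rintro ⟨h0, h2, h3⟩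
    set A : Set ℝ := {t | t ∈ Set.Icc (0:ℝ) T ∧ ∀ s ∈ Set.Icc (0:ℝ) t, P s} with hA
    have h0A : (0:ℝ) ∈ A := ⟨⟨le_refl 0, hT.le⟩, fun s hs => by
      have : s = 0 := le_antisymm hs.2 hs.1
      rwa [this]⟩
    have hbdd : BddAbove A := ⟨T, fun t ht => ht.1.2⟩
    have hne : A.Nonempty := ⟨0, h0A⟩
    set u := sSup A with hu
    have hu0 : 0 ≤ u := le_csSup hbdd h0A
    have huT : u ≤ T := csSup_le hne (fun t ht => ht.1.2)
    -- P holds on [0, u)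
    have hlt : ∀ s ∈ Set.Ico (0:ℝ) u, P s := by
      intro s hs
      obtain ⟨t, htA, hst⟩ := exists_lt_of_lt_csSup hne hs.2
      exact htA.2 s ⟨hs.1, hst.le⟩
    have hPu : P u := by
      rcases eq_or_lt_of_le hu0 with h | h
      · rwa [← h]
      · exact h2 u ⟨h, huT⟩ hlt
    have hIcc : ∀ s ∈ Set.Icc (0:ℝ) u, P s := by
      intro s hs
      rcases eq_or_lt_of_le hs.2 with h | h
      · rwa [h]
      · exact hlt s ⟨hs.1, h⟩
    have huT' : u = T := by
      by_contra hne'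
      have hult : u < T := lt_of_le_of_ne huT hne'
      obtain ⟨ε, hε, hP⟩ := h3 u ⟨hu0, hult⟩ hIcc
      set v := u + min ε (T - u) / 2 with hv
      have hvpos : u < v := by
        have : 0 < min ε (T - u) := lt_min hε (by linarith)
        simp only [hv]; linarith
      have hvT : v ≤ T := by
        have : min ε (T - u) ≤ T - u := min_le_right _ _
        simp only [hv]; linarith
      have hvA : v ∈ A := by
        refine ⟨⟨by linarith, hvT⟩, fun s hs => ?_⟩
        rcases le_or_gt s u with h | h
        · exact hIcc s ⟨hs.1, h⟩
        · apply hP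
          have : min ε (T - u) ≤ ε := min_le_left _ _
          exact ⟨h, by have := hs.2; simp only [hv] at this ⊢; linarith⟩
      exact absurd (le_csSup hbdd hvA) (not_le.mpr hvpos)
    intro t ht
    exact hIcc t ⟨ht.1, huT' ▸ ht.2⟩
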